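/- Let g : ℝ^{d_θ} → ℝ^{d_g} be continuously differentiable in a neighborhood of θ_0 with derivative matrix G(θ), let Θ = {θ : g(θ) ≤ 0 componentwise}, and let θ_n ∈ Θ with θ_n → θ_0 and √n · g(θ_n) → b ∈ ℝ^{d_g}. Define Λ = {λ ∈ ℝ^{d_θ} : b + G(θ_0)λ ≤ 0}. If there exists λ̃ ∈ Λ with e_j'b + e_j'G(θ_0)λ̃ < 0 for all j ∈ {1,…,d_g}, then the sets √n(Θ − θ_n) converge in the Painlevé–Kuratowski sense to Λ. -/

import Mathlib

open Filter Topology Set Metric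

/-- The Painlevé–Kuratowski limsup of a sequence of sets:
points whose distance to `A n` has liminf zero. -/
def pkLimsup {H : Type*} [PseudoEMetricSpace H] (A : ℕ → Set H) : Set H :=
  {h | Filter.atTop.liminf (fun n => EMetric.infEdist h (A n)) = 0}

/-- The Painlevé–Kuratowski liminf of a sequence of sets:
points whose distance to `A n` tends to zero. -/
def pkLiminf {H : Type*} [PseudoEMetricSpace H] (A : ℕ → Set H) : Set H :=
  {h | Tendsto (fun n => EMetric.infEdist h (A n)) atTop (𝓝 0)}

/-- Painlevé–Kuratowski convergence: limsup and liminf both equal the limit set. -/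
def PKTendsto {H : Type*} [PseudoEMetricSpace H] (A : ℕ → Set H) (L : Set H) : Prop :=
  pkLimsup A = L ∧ pkLiminf A = L

private lemma sqrt_nat_tendsto_atTop : Tendsto (fun n : ℕ => Real.sqrt n) atTop atTop := by
  have h1 : Tendsto Real.sqrt atTop atTop := by
    rw [Filter.tendsto_atTop_atTop]
    intro M
    refine ⟨max (M ^ 2) 0, fun a ha => ?_⟩
    calc M ≤ |M| := le_abs_self M
      _ = Real.sqrt (M ^ 2) := (Real.sqrt_sq_eq_abs M).symm
      _ ≤ Real.sqrt a := Real.sqrt_le_sqrt (le_trans (le_max_left _ _) ha)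
  exact h1.comp tendsto_natCast_atTop_atTop

set_option maxHeartbeats 1000000 in
/-- Local PK convergence of a parameter space defined by inequalities, near the boundary.
If `g` is C¹ near `θ₀` with derivative `G`, `θ_n ∈ Θ = {g ≤ 0}`, `θ_n → θ₀`,
`√n g(θ_n) → b`, and the Mangasarian–Fromowitz constraint qualification holds, then
`√n(Θ − θ_n) → Λ = {λ : b + G(θ₀)λ ≤ 0}` in the PK sense. -/
theorem pk_boundary_inequalities {dθ dg : ℕ}
    (g : (Fin dθ → ℝ) → (Fin dg → ℝ)) (θ₀ : Fin dθ → ℝ)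
    (U : Set (Fin dθ → ℝ)) (hU : IsOpen U) (hθ₀U : θ₀ ∈ U)
    (G : (Fin dθ → ℝ) → ((Fin dθ → ℝ) →L[ℝ] (Fin dg → ℝ)))
    (hderiv : ∀ θ ∈ U, HasFDerivAt g (G θ) θ)
    (hGcont : ContinuousOn G U)
    (θn : ℕ → (Fin dθ → ℝ))
    (hθnΘ : ∀ n, θn n ∈ {θ : Fin dθ → ℝ | ∀ j, g θ j ≤ 0})
    (hθn : Tendsto θn atTop (𝓝 θ₀))
    (b : Fin dg → ℝ)
    (hb : Tendsto (fun n : ℕ => fun j => Real.sqrt n * g (θn n) j) atTop (𝓝 b))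
    (hCQ : ∃ lam : Fin dθ → ℝ, (∀ j, b j + G θ₀ lam j ≤ 0) ∧ (∀ j, b j + G θ₀ lam j < 0)) :
    PKTendsto
      (fun n : ℕ =>
        (fun θ : Fin dθ → ℝ => Real.sqrt n • (θ - θn n)) '' {θ | ∀ j, g θ j ≤ 0})
      {lam : Fin dθ → ℝ | ∀ j, b j + G θ₀ lam j ≤ 0} := by
  obtain ⟨lam0, _, hlam0⟩ := hCQ
  set A : ℕ → Set (Fin dθ → ℝ) := fun n : ℕ =>
    (fun θ : Fin dθ → ℝ => Real.sqrt n • (θ - θn n)) '' {θ | ∀ j, g θ j ≤ 0} with hA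
  set Λ : Set (Fin dθ → ℝ) := {lam : Fin dθ → ℝ | ∀ j, b j + G θ₀ lam j ≤ 0} with hΛ
  -- componentwise convergence of √n g(θn n)
  have hbj : ∀ j, Tendsto (fun n : ℕ => Real.sqrt n * g (θn n) j) atTop (𝓝 (b j)) := by
    intro j
    exact tendsto_pi_nhds.mp hb j
  -- uniform first-order approximation near θ₀
  have hunif : ∀ ε : ℝ, 0 < ε → ∃ r > 0, Metric.ball θ₀ r ⊆ U ∧
      ∀ x ∈ Metric.ball θ₀ r, ∀ y ∈ Metric.ball θ₀ r,
        ‖g y - g x - G θ₀ (y - x)‖ ≤ ε * ‖y - x‖ := by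
    intro ε hε
    have hc : ContinuousAt G θ₀ := hGcont.continuousAt (hU.mem_nhds hθ₀U)
    obtain ⟨r₁, hr₁, hball⟩ := Metric.continuousAt_iff.mp hc ε hε
    obtain ⟨r₂, hr₂, hU2⟩ := Metric.isOpen_iff.mp hU θ₀ hθ₀U
    have hsub : Metric.ball θ₀ (min r₁ r₂) ⊆ U :=
      (Metric.ball_subset_ball (min_le_right _ _)).trans hU2
    refine ⟨min r₁ r₂, lt_min hr₁ hr₂, hsub, ?_⟩
    intro x hx y hy
    have key := Convex.norm_image_sub_le_of_norm_hasFDerivWithin_le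
      (f := fun θ => g θ - G θ₀ θ) (f' := fun ξ => G ξ - G θ₀)
      (s := Metric.ball θ₀ (min r₁ r₂)) (C := ε)
      (fun ξ hξ => ((hderiv ξ (hsub hξ)).sub ((G θ₀).hasFDerivAt)).hasFDerivWithinAt)
      (fun ξ hξ => by
        have hd : dist ξ θ₀ < r₁ := lt_of_lt_of_le (Metric.mem_ball.mp hξ) (min_le_left _ _)
        have := hball hd
        rw [dist_eq_norm] at this
        exact this.le)
      (convex_ball _ _) hx hy
    have hrw : (g y - G θ₀ y) - (g x - G θ₀ x) = g y - g x - G θ₀ (y - x) := by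
      rw [sub_sub_sub_comm, ← map_sub]
    simpa [hrw] using key
  -- the inverse of √n times a constant vector goes to 0
  have hinv : Tendsto (fun n : ℕ => (Real.sqrt n)⁻¹) atTop (𝓝 0) :=
    tendsto_inv_atTop_zero.comp sqrt_nat_tendsto_atTop
  -- strict points are eventually members of A n
  have hstrict : ∀ lam' : Fin dθ → ℝ, (∀ j, b j + G θ₀ lam' j < 0) →
      ∀ᶠ n in atTop, lam' ∈ A n := by
    intro lam' hlt
    have hje : ∀ j, ∀ᶠ n in atTop, g (θn n + (Real.sqrt n)⁻¹ • lam') j ≤ 0 := by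
      intro j
      set c : ℝ := -(b j + G θ₀ lam' j) with hcdef
      have hcpos : 0 < c := by have := hlt j; simp only [hcdef]; linarith
      set ε : ℝ := c / (2 * (‖lam'‖ + 1)) with hεdef
      have hεpos : 0 < ε := by positivity
      obtain ⟨r, hr, hrU, hkey⟩ := hunif ε hεpos
      have e1 : ∀ᶠ n in atTop, dist (θn n) θ₀ < r / 2 :=
        Metric.tendsto_nhds.mp hθn _ (by positivity)
      have e2 : ∀ᶠ n : ℕ in atTop, (Real.sqrt n)⁻¹ * (‖lam'‖ + 1) < r / 2 := by
        have h0 : Tendsto (fun n : ℕ => (Real.sqrt n)⁻¹ * (‖lam'‖ + 1)) atTop (𝓝 0) := by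
          simpa using hinv.mul_const (‖lam'‖ + 1)
        exact h0.eventually_lt_const (by positivity)
      have e3 : ∀ᶠ n : ℕ in atTop, Real.sqrt n * g (θn n) j < b j + c / 4 :=
        (hbj j).eventually_lt_const (by linarith)
      filter_upwards [e1, e2, e3, eventually_ge_atTop 1] with n h1 h2 h3 h4
      have hnpos : (0 : ℝ) < (n : ℝ) := by exact_mod_cast h4
      have hspos : 0 < Real.sqrt n := Real.sqrt_pos.mpr hnpos
      set s : ℝ := Real.sqrt n with hsdef
      have hss : s * s⁻¹ = 1 := mul_inv_cancel₀ hspos.ne'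
      set θ' : Fin dθ → ℝ := θn n + s⁻¹ • lam' with hθ'def
      have hdiff : θ' - θn n = s⁻¹ • lam' := add_sub_cancel_left _ _
      have hnd : ‖s⁻¹ • lam'‖ = s⁻¹ * ‖lam'‖ := by
        rw [norm_smul, Real.norm_eq_abs, abs_of_pos (inv_pos.mpr hspos)]
      have hx : θn n ∈ Metric.ball θ₀ r := by
        rw [Metric.mem_ball]; linarith
      have hy : θ' ∈ Metric.ball θ₀ r := by
        rw [Metric.mem_ball]
        have hd1 : dist θ' (θn n) = ‖s⁻¹ • lam'‖ := by
          rw [dist_eq_norm, hdiff]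
        have hle : ‖s⁻¹ • lam'‖ < r / 2 := by
          rw [hnd]
          have : s⁻¹ * ‖lam'‖ ≤ s⁻¹ * (‖lam'‖ + 1) :=
            mul_le_mul_of_nonneg_left (by linarith) (inv_pos.mpr hspos).le
          linarith
        calc dist θ' θ₀ ≤ dist θ' (θn n) + dist (θn n) θ₀ := dist_triangle _ _ _
          _ < r / 2 + r / 2 := by rw [hd1]; exact add_lt_add hle h1
          _ = r := by ring
      have hk := hkey (θn n) hx θ' hy
      rw [hdiff, hnd] at hk
      have hcomp : |(g θ' - g (θn n) - G θ₀ (s⁻¹ • lam')) j| ≤ ε * (s⁻¹ * ‖lam'‖) := by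
        calc |(g θ' - g (θn n) - G θ₀ (s⁻¹ • lam')) j|
            = ‖(g θ' - g (θn n) - G θ₀ (s⁻¹ • lam')) j‖ := (Real.norm_eq_abs _).symm
          _ ≤ ‖g θ' - g (θn n) - G θ₀ (s⁻¹ • lam')‖ := norm_le_pi_norm _ j
          _ ≤ ε * (s⁻¹ * ‖lam'‖) := hk
      have hGj : G θ₀ (s⁻¹ • lam') j = s⁻¹ * G θ₀ lam' j := by
        rw [map_smul]; rfl
      have hupper : g θ' j ≤ g (θn n) j + s⁻¹ * G θ₀ lam' j + ε * (s⁻¹ * ‖lam'‖) := by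
        have := (abs_le.mp hcomp).2
        simp only [Pi.sub_apply] at this
        rw [hGj] at this
        linarith
      have hεb : ε * ‖lam'‖ ≤ c / 2 := by
        have h2' : ε * (‖lam'‖ + 1) = c / 2 := by
          rw [hεdef]; field_simp
        nlinarith [norm_nonneg lam', hεpos]
      have hmul : s * g θ' j ≤ s * g (θn n) j + G θ₀ lam' j + ε * ‖lam'‖ := by
        have h1' : s * g θ' j ≤
            s * (g (θn n) j + s⁻¹ * G θ₀ lam' j + ε * (s⁻¹ * ‖lam'‖)) :=
          mul_le_mul_of_nonneg_left hupper hspos.le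
        have h2' : s * (g (θn n) j + s⁻¹ * G θ₀ lam' j + ε * (s⁻¹ * ‖lam'‖))
            = s * g (θn n) j + (s * s⁻¹) * G θ₀ lam' j + (s * s⁻¹) * (ε * ‖lam'‖) := by ring
        rw [h2', hss] at h1'
        linarith
      have hfin : s * g θ' j < 0 := by
        have hbG : b j + G θ₀ lam' j = -c := by rw [hcdef]; ring
        linarith [hmul, h3]
      by_contra hcon
      push_neg at hcon
      linarith [mul_pos hspos hcon]
    have hjeall : ∀ᶠ n in atTop, ∀ j, g (θn n + (Real.sqrt n)⁻¹ • lam') j ≤ 0 :=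
      eventually_all.mpr hje
    filter_upwards [hjeall, eventually_ge_atTop 1] with n hg1 hn1
    have hnpos : (0 : ℝ) < (n : ℝ) := by exact_mod_cast hn1
    have hspos : 0 < Real.sqrt n := Real.sqrt_pos.mpr hnpos
    refine ⟨θn n + (Real.sqrt n)⁻¹ • lam', hg1, ?_⟩
    show Real.sqrt n • (θn n + (Real.sqrt n)⁻¹ • lam' - θn n) = lam'
    rw [add_sub_cancel_left, smul_inv_smul₀ hspos.ne']
  -- Λ ⊆ pkLiminf A
  have hliminf : Λ ⊆ pkLiminf A := by
    intro lam hlam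
    simp only [pkLiminf, mem_setOf_eq]
    rw [ENNReal.tendsto_atTop_zero]
    intro ε hε
    obtain ⟨t, ht0, ht1, htε⟩ : ∃ t : ℝ, 0 < t ∧ t ≤ 1 ∧
        ENNReal.ofReal (t * ‖lam0 - lam‖) ≤ ε := by
      rcases eq_or_ne ε ⊤ with htop | hnetop
      · exact ⟨1, one_pos, le_refl 1, by rw [htop]; exact le_top⟩
      · have hεR : 0 < ε.toReal := ENNReal.toReal_pos hε.ne' hnetop
        refine ⟨min 1 (ε.toReal / (‖lam0 - lam‖ + 1)), lt_min one_pos (by positivity),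
          min_le_left _ _, ?_⟩
        apply ENNReal.ofReal_le_of_le_toReal
        have h1 : min 1 (ε.toReal / (‖lam0 - lam‖ + 1)) ≤ ε.toReal / (‖lam0 - lam‖ + 1) :=
          min_le_right _ _
        have h2 : 0 ≤ ‖lam0 - lam‖ := norm_nonneg _
        calc min 1 (ε.toReal / (‖lam0 - lam‖ + 1)) * ‖lam0 - lam‖
            ≤ ε.toReal / (‖lam0 - lam‖ + 1) * ‖lam0 - lam‖ :=
              mul_le_mul_of_nonneg_right h1 h2
          _ ≤ ε.toReal / (‖lam0 - lam‖ + 1) * (‖lam0 - lam‖ + 1) :=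
              mul_le_mul_of_nonneg_left (by linarith) (by positivity)
          _ = ε.toReal := by field_simp
    set lamt : Fin dθ → ℝ := lam + t • (lam0 - lam) with hlamt
    have hstrict_t : ∀ j, b j + G θ₀ lamt j < 0 := by
      intro j
      have hmap : G θ₀ lamt = G θ₀ lam + t • (G θ₀ lam0 - G θ₀ lam) := by
        rw [hlamt, map_add, map_smul, map_sub]
      have hmapj : G θ₀ lamt j = G θ₀ lam j + t * (G θ₀ lam0 j - G θ₀ lam j) := by
        rw [hmap]; rfl
      rw [hmapj]
      have h1 := hlam j
      have h2 := hlam0 j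
      nlinarith [mul_nonneg (by linarith : (0:ℝ) ≤ 1 - t) (by linarith : (0:ℝ) ≤ -(b j + G θ₀ lam j)),
        mul_pos ht0 (by linarith : (0:ℝ) < -(b j + G θ₀ lam0 j))]
    have hmem := hstrict lamt hstrict_t
    rw [eventually_atTop] at hmem
    obtain ⟨N, hN⟩ := hmem
    refine ⟨N, fun n hn => ?_⟩
    have hmemn := hN n hn
    calc EMetric.infEdist lam (A n)
        ≤ EMetric.infEdist lamt (A n) + edist lam lamt :=
          EMetric.infEdist_le_infEdist_add_edist
      _ = edist lam lamt := by rw [show EMetric.infEdist lamt (A n) = 0 from EMetric.infEdist_zero_of_mem hmemn, zero_add]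
      _ = ENNReal.ofReal (t * ‖lam0 - lam‖) := by
          rw [edist_dist, dist_eq_norm]
          congr 1
          rw [hlamt]
          have : lam - (lam + t • (lam0 - lam)) = -(t • (lam0 - lam)) := by abel
          rw [this, norm_neg, norm_smul, Real.norm_eq_abs, abs_of_pos ht0]
      _ ≤ ε := htε
  -- pkLimsup A ⊆ Λ
  have hlimsup : pkLimsup A ⊆ Λ := by
    intro lam hlam
    simp only [pkLimsup, mem_setOf_eq] at hlam
    intro j
    by_contra hcon
    push_neg at hcon
    set c : ℝ := b j + G θ₀ lam j with hcdef
    have hcpos : 0 < c := hcon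
    set M : ℝ := ‖G θ₀‖ with hMdef
    have hM : 0 ≤ M := norm_nonneg _
    set ε : ℝ := c / (4 * (‖lam‖ + 2)) with hεdef
    have hεpos : 0 < ε := by positivity
    set δ : ℝ := min 1 (c / (4 * (M + 1))) with hδdef
    have hδpos : 0 < δ := lt_min one_pos (by positivity)
    have hδ1 : δ ≤ 1 := min_le_left _ _
    have hδM : M * δ ≤ c / 4 := by
      have h1 : δ ≤ c / (4 * (M + 1)) := min_le_right _ _
      calc M * δ ≤ M * (c / (4 * (M + 1))) := mul_le_mul_of_nonneg_left h1 hM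
        _ ≤ (M + 1) * (c / (4 * (M + 1))) := by
            apply mul_le_mul_of_nonneg_right (by linarith) (by positivity)
        _ = c / 4 := by field_simp
    obtain ⟨r, hr, hrU, hkey⟩ := hunif ε hεpos
    have e1 : ∀ᶠ n in atTop, dist (θn n) θ₀ < r / 2 :=
      Metric.tendsto_nhds.mp hθn _ (by positivity)
    have e2 : ∀ᶠ n : ℕ in atTop, (Real.sqrt n)⁻¹ * (‖lam‖ + 2) < r / 2 := by
      have h0 : Tendsto (fun n : ℕ => (Real.sqrt n)⁻¹ * (‖lam‖ + 2)) atTop (𝓝 0) := by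
        simpa using hinv.mul_const (‖lam‖ + 2)
      exact h0.eventually_lt_const (by positivity)
    have e3 : ∀ᶠ n : ℕ in atTop, b j - c / 4 < Real.sqrt n * g (θn n) j :=
      (hbj j).eventually_const_lt (by linarith)
    have heva : ∀ᶠ n in atTop, ENNReal.ofReal δ ≤ EMetric.infEdist lam (A n) := by
      filter_upwards [e1, e2, e3, eventually_ge_atTop 1] with n h1 h2 h3 h4
      refine (EMetric.le_infEdist).2 ?_
      rintro μ ⟨θ, hθ, rfl⟩
      rw [edist_dist]
      apply ENNReal.ofReal_le_ofReal
      by_contra hd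
      push_neg at hd
      have hnpos : (0 : ℝ) < (n : ℝ) := by exact_mod_cast h4
      have hspos : 0 < Real.sqrt n := Real.sqrt_pos.mpr hnpos
      set s : ℝ := Real.sqrt n with hsdef
      have hss : s * s⁻¹ = 1 := mul_inv_cancel₀ hspos.ne'
      set μ : Fin dθ → ℝ := s • (θ - θn n) with hμdef
      have hdμ : ‖μ - lam‖ < δ := by
        rw [← dist_eq_norm, dist_comm]
        exact hd
      have hμnorm : ‖μ‖ ≤ ‖lam‖ + 1 := by
        calc ‖μ‖ = ‖lam + (μ - lam)‖ := by congr 1; abel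
          _ ≤ ‖lam‖ + ‖μ - lam‖ := norm_add_le _ _
          _ ≤ ‖lam‖ + 1 := by linarith
      have hθsub : θ - θn n = s⁻¹ • μ := by
        rw [hμdef, inv_smul_smul₀ hspos.ne']
      have hθnorm : ‖θ - θn n‖ < r / 2 := by
        rw [hθsub, norm_smul, Real.norm_eq_abs, abs_of_pos (inv_pos.mpr hspos)]
        have h2' : s⁻¹ * ‖μ‖ ≤ s⁻¹ * (‖lam‖ + 2) := by
          apply mul_le_mul_of_nonneg_left (by linarith) (inv_pos.mpr hspos).le
        linarith
      have hx : θn n ∈ Metric.ball θ₀ r := by rw [Metric.mem_ball]; linarith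
      have hy : θ ∈ Metric.ball θ₀ r := by
        rw [Metric.mem_ball]
        calc dist θ θ₀ ≤ dist θ (θn n) + dist (θn n) θ₀ := dist_triangle _ _ _
          _ < r / 2 + r / 2 := by
              apply add_lt_add _ h1
              rw [dist_eq_norm]
              exact hθnorm
          _ = r := by ring
      have hk := hkey (θn n) hx θ hy
      have hnd : ‖θ - θn n‖ = s⁻¹ * ‖μ‖ := by
        rw [hθsub, norm_smul, Real.norm_eq_abs, abs_of_pos (inv_pos.mpr hspos)]
      rw [hnd] at hk
      have hcomp : |(g θ - g (θn n) - G θ₀ (θ - θn n)) j| ≤ ε * (s⁻¹ * ‖μ‖) := by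
        calc |(g θ - g (θn n) - G θ₀ (θ - θn n)) j|
            = ‖(g θ - g (θn n) - G θ₀ (θ - θn n)) j‖ := (Real.norm_eq_abs _).symm
          _ ≤ ‖g θ - g (θn n) - G θ₀ (θ - θn n)‖ := norm_le_pi_norm _ j
          _ ≤ ε * (s⁻¹ * ‖μ‖) := hk
      have hGj : G θ₀ (θ - θn n) j = s⁻¹ * G θ₀ μ j := by
        rw [hθsub, map_smul]; rfl
      have hlower : g (θn n) j + s⁻¹ * G θ₀ μ j - ε * (s⁻¹ * ‖μ‖) ≤ g θ j := by
        have := (abs_le.mp hcomp).1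
        simp only [Pi.sub_apply] at this
        rw [hGj] at this
        linarith
      have hmul : s * g (θn n) j + G θ₀ μ j - ε * ‖μ‖ ≤ s * g θ j := by
        have h1' : s * (g (θn n) j + s⁻¹ * G θ₀ μ j - ε * (s⁻¹ * ‖μ‖)) ≤ s * g θ j :=
          mul_le_mul_of_nonneg_left hlower hspos.le
        have h2' : s * (g (θn n) j + s⁻¹ * G θ₀ μ j - ε * (s⁻¹ * ‖μ‖))
            = s * g (θn n) j + (s * s⁻¹) * G θ₀ μ j - (s * s⁻¹) * (ε * ‖μ‖) := by ring
        rw [h2', hss] at h1'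
        linarith
      -- G θ₀ μ j ≥ G θ₀ lam j - M * δ
      have hGμ : G θ₀ lam j - M * δ ≤ G θ₀ μ j := by
        have habs : |G θ₀ μ j - G θ₀ lam j| ≤ M * δ := by
          have h1' : G θ₀ μ j - G θ₀ lam j = (G θ₀ (μ - lam)) j := by
            rw [map_sub]; rfl
          rw [h1']
          calc |(G θ₀ (μ - lam)) j| = ‖(G θ₀ (μ - lam)) j‖ := (Real.norm_eq_abs _).symm
            _ ≤ ‖G θ₀ (μ - lam)‖ := norm_le_pi_norm _ j
            _ ≤ M * ‖μ - lam‖ := (G θ₀).le_opNorm _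
            _ ≤ M * δ := mul_le_mul_of_nonneg_left hdμ.le hM
        linarith [(abs_le.mp habs).1]
      have hεμ : ε * ‖μ‖ ≤ c / 4 := by
        have h1' : ε * ‖μ‖ ≤ ε * (‖lam‖ + 2) :=
          mul_le_mul_of_nonneg_left (by linarith) hεpos.le
        have h2' : ε * (‖lam‖ + 2) = c / 4 := by
          rw [hεdef]; field_simp
        linarith
      have hgneg : s * g θ j ≤ 0 :=
        mul_nonpos_of_nonneg_of_nonpos hspos.le (hθ j)
      nlinarith
    have hge : ENNReal.ofReal δ ≤ atTop.liminf (fun n => EMetric.infEdist lam (A n)) :=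
      le_liminf_of_le (by isBoundedDefault) heva
    rw [hlam] at hge
    have : (0 : ENNReal) < ENNReal.ofReal δ := ENNReal.ofReal_pos.mpr hδpos
    exact absurd (le_antisymm hge zero_le) this.ne'
  -- pkLiminf ⊆ pkLimsup
  have hsub : pkLiminf A ⊆ pkLimsup A := by
    intro lam hlam
    simp only [pkLiminf, mem_setOf_eq] at hlam
    simp only [pkLimsup, mem_setOf_eq]
    exact hlam.liminf_eq
  constructor
  · exact le_antisymm hlimsup (hliminf.trans hsub)
  · exact le_antisymm (hsub.trans hlimsup) hliminf
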